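/- Let μ ∈ ℝ satisfy the normalization condition ∑_{a∈A} p(a)·ρ*_μ(a) = 1, where ρ*_μ(a) = c_l + (c_h − c_l)/(1 + b·exp(−(q(a) − μ)/λ)). Then (i) c_l < ρ*_μ(a) < c_h for every a; and (ii) for every ρ : A → ℝ satisfying c_l < ρ(a) < c_h for all a and ∑_{a∈A} p(a)·ρ(a) = 1, one has ∑_{a∈A} p(a)·(ρ(a)·q(a) − λ·H'(ρ(a))) ≤ ∑_{a∈A} p(a)·(ρ*_μ(a)·q(a) − λ·H'(ρ*_μ(a))). That is, ρ*_μ is the maximizer of the regularized linear objective over the asymmetric bounded-ratio simplex. -/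
import Mathlib


noncomputable def H' (cl ch ρ : ℝ) : ℝ :=
  (ρ - cl) * Real.log (ρ - cl) + (ch - ρ) * Real.log (ch - ρ) +
    ρ * Real.log ((ch - 1) / (1 - cl))

lemma klaux {a b : ℝ} (ha : 0 < a) (hb : 0 < b) :
    a - b ≤ a * (Real.log a - Real.log b) := by
  have h := Real.log_le_sub_one_of_pos (div_pos hb ha)
  rw [Real.log_div hb.ne' ha.ne'] at h
  have h2 := mul_le_mul_of_nonneg_left h ha.le
  have : a * (b / a - 1) = b - a := by field_simp
  nlinarith

lemma pointwise (cl ch lam q μ x y : ℝ) (hlam : 0 < lam)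
    (hx1 : cl < x) (hx2 : x < ch) (hy1 : cl < y) (hy2 : y < ch)
    (hq : q - μ = lam * (Real.log ((ch - 1) / (1 - cl)) + Real.log (y - cl) - Real.log (ch - y))) :
    x * q - lam * H' cl ch x - μ * x ≤ y * q - lam * H' cl ch y - μ * y := by
  have L1 := klaux (a := x - cl) (b := y - cl) (by linarith) (by linarith)
  have L2 := klaux (a := ch - x) (b := ch - y) (by linarith) (by linarith)
  have key : (x - y) * (Real.log (y - cl) - Real.log (ch - y)) ≤
      (x - cl) * Real.log (x - cl) + (ch - x) * Real.log (ch - x)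
        - (y - cl) * Real.log (y - cl) - (ch - y) * Real.log (ch - y) := by
    nlinarith [L1, L2]
  have key2 := mul_le_mul_of_nonneg_left key hlam.le
  unfold H'
  nlinarith [key2, hq]

theorem stmt13 {A : Type*} [Fintype A] [Nonempty A]
    (p : A → ℝ) (hp : ∀ a, 0 < p a) (hpsum : ∑ a, p a = 1)
    (q : A → ℝ) (lam : ℝ) (hlam : 0 < lam)
    (cl ch b : ℝ) (hcl : cl < 1) (hch : 1 < ch) (hb : b = (ch - 1) / (1 - cl))
    (μ : ℝ) (ρstar : A → ℝ)
    (hρ : ∀ a, ρstar a = cl + (ch - cl) / (1 + b * Real.exp (-(q a - μ) / lam)))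
    (hnorm : ∑ a, p a * ρstar a = 1) :
    (∀ a, cl < ρstar a ∧ ρstar a < ch) ∧
    (∀ ρ : A → ℝ, (∀ a, cl < ρ a ∧ ρ a < ch) → (∑ a, p a * ρ a = 1) →
      ∑ a, p a * (ρ a * q a - lam * H' cl ch (ρ a)) ≤
        ∑ a, p a * (ρstar a * q a - lam * H' cl ch (ρstar a))) := by
  have hbpos : 0 < b := by
    rw [hb]; exact div_pos (by linarith) (by linarith)
  have hbounds : ∀ a, cl < ρstar a ∧ ρstar a < ch := by
    intro a
    have hE : 0 < Real.exp (-(q a - μ) / lam) := Real.exp_pos _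
    have hD : 1 < 1 + b * Real.exp (-(q a - μ) / lam) := by nlinarith
    have hDpos : 0 < 1 + b * Real.exp (-(q a - μ) / lam) := by linarith
    rw [hρ a]
    constructor
    · have : 0 < (ch - cl) / (1 + b * Real.exp (-(q a - μ) / lam)) :=
        div_pos (by linarith) hDpos
      linarith
    · have : (ch - cl) / (1 + b * Real.exp (-(q a - μ) / lam)) < ch - cl := by
        rw [div_lt_iff₀ hDpos]; nlinarith
      linarith
  refine ⟨hbounds, ?_⟩
  intro ρ hρb hρsum
  -- the critical point equation
  have hq : ∀ a, q a - μ = lam * (Real.log ((ch - 1) / (1 - cl)) + Real.log (ρstar a - cl)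
      - Real.log (ch - ρstar a)) := by
    intro a
    set E := Real.exp (-(q a - μ) / lam) with hEdef
    have hE : 0 < E := Real.exp_pos _
    have hlogE : Real.log E = -(q a - μ) / lam := by rw [hEdef]; exact Real.log_exp _
    have hrs : ρstar a = cl + (ch - cl) / (1 + b * E) := by rw [hρ a, ← hEdef]
    clear_value E
    have hD : 0 < 1 + b * E := by nlinarith
    have h1 : ρstar a - cl = (ch - cl) / (1 + b * E) := by rw [hrs]; ring
    have h2 : ch - ρstar a = (ch - cl) * (b * E) / (1 + b * E) := by
      rw [hrs]; field_simp; ring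
    have hchcl : (0:ℝ) < ch - cl := by linarith
    rw [h1, h2, Real.log_div hchcl.ne' hD.ne',
      Real.log_div (by positivity) hD.ne', Real.log_mul hchcl.ne' (by positivity),
      Real.log_mul hbpos.ne' hE.ne', hlogE, ← hb]
    field_simp
    ring
  have hpt : ∀ a ∈ (Finset.univ : Finset A),
      p a * (ρ a * q a - lam * H' cl ch (ρ a) - μ * ρ a) ≤
      p a * (ρstar a * q a - lam * H' cl ch (ρstar a) - μ * ρstar a) := by
    intro a _
    have := pointwise cl ch lam (q a) μ (ρ a) (ρstar a) hlam
      (hρb a).1 (hρb a).2 (hbounds a).1 (hbounds a).2 (hq a)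
    exact mul_le_mul_of_nonneg_left this (hp a).le
  have hsum := Finset.sum_le_sum hpt
  have split : ∀ (r : A → ℝ), (∑ a, p a * r a = 1) →
      ∑ a, p a * (r a * q a - lam * H' cl ch (r a) - μ * r a) =
      ∑ a, p a * (r a * q a - lam * H' cl ch (r a)) - μ := by
    intro r hr
    have : ∑ a, p a * (r a * q a - lam * H' cl ch (r a) - μ * r a) =
        ∑ a, (p a * (r a * q a - lam * H' cl ch (r a)) - μ * (p a * r a)) := by
      apply Finset.sum_congr rfl; intro a _; ring
    rw [this, Finset.sum_sub_distrib, ← Finset.mul_sum, hr, mul_one]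
  rw [split ρ hρsum, split ρstar hnorm] at hsum
  linarith
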